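/- Let Q ∈ S[T^{±1}][[X]] be a power series with Q ≡ 1 mod X. Then there is at most one family (Q_m)_{m∈ℤ} of power series with Q_m ≡ 1 mod X, Q_m lying in S[[XT^m]], and Q_m = 1 for all but finitely many m, such that Q = ∏_{m∈ℤ} Q_m. Moreover, if Q is a polynomial in X (i.e. Q ∈ S[T^{±1}][X]), then each Q_m in such a factorization is a polynomial in X (i.e. Q_m ∈ S[XT^m]). -/

import Mathlib

open LaurentPolynomial

/-- A power series `Q ∈ S[T^{±1}][[X]]` "lies in `S[[XT^m]]`" if for every `k` the
coefficient of `X^k` has the form `c·T^{mk}` with `c ∈ S`. -/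
def InXTpow (S : Type*) [CommRing S] (m : ℤ) (Q : PowerSeries (LaurentPolynomial S)) :
    Prop :=
  ∀ k : ℕ, ∃ c : S,
    PowerSeries.coeff (R := LaurentPolynomial S) k Q = LaurentPolynomial.C c * T (m * k)

section Aux

variable {S : Type*} [CommRing S]

lemma inx_coeff {m : ℤ} {P : PowerSeries (LaurentPolynomial S)} (h : InXTpow S m P) (k : ℕ) :
    ∃ c : S, PowerSeries.coeff (R := LaurentPolynomial S) k P = AddMonoidAlgebra.single (m * k) c := by
  obtain ⟨c, hc⟩ := h k
  exact ⟨c, by rw [hc, LaurentPolynomial.single_eq_C_mul_T]⟩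

lemma single_mul_apply' (n : ℤ) (c : S) (f : LaurentPolynomial S) (j : ℤ) :
    ((AddMonoidAlgebra.single n c : LaurentPolynomial S) * f).coeff j = c * f.coeff (j - n) := by
  have := AddMonoidAlgebra.coeff_single_mul_apply f c n j
  simpa [neg_add_eq_sub] using this

/-- upper bound on T-degrees of coefficients -/
def UB (β : ℤ) (P : PowerSeries (LaurentPolynomial S)) : Prop :=
  ∀ (k : ℕ) (j : ℤ), β * k < j → (PowerSeries.coeff (R := LaurentPolynomial S) k P).coeff j = 0

/-- lower bound on T-degrees of coefficients -/
def LB (α : ℤ) (P : PowerSeries (LaurentPolynomial S)) : Prop :=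
  ∀ (k : ℕ) (j : ℤ), j < α * k → (PowerSeries.coeff (R := LaurentPolynomial S) k P).coeff j = 0

lemma UB_one (β : ℤ) : UB β (1 : PowerSeries (LaurentPolynomial S)) := by
  intro k j hj
  rw [PowerSeries.coeff_one]
  split_ifs with h
  · subst h
    simp only [Nat.cast_zero, mul_zero] at hj
    have : (1 : LaurentPolynomial S).coeff = Finsupp.single 0 1 := rfl
    rw [this, Finsupp.single_apply, if_neg (by omega)]
  · rfl

lemma LB_one (α : ℤ) : LB α (1 : PowerSeries (LaurentPolynomial S)) := by
  intro k j hj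
  rw [PowerSeries.coeff_one]
  split_ifs with h
  · subst h
    simp only [Nat.cast_zero, mul_zero] at hj
    have : (1 : LaurentPolynomial S).coeff = Finsupp.single 0 1 := rfl
    rw [this, Finsupp.single_apply, if_neg (by omega)]
  · rfl

lemma mul_apply_eq_zero' {f g : LaurentPolynomial S} {j : ℤ}
    (h : ∀ j1 j2 : ℤ, j1 + j2 = j → f.coeff j1 = 0 ∨ g.coeff j2 = 0) : (f * g).coeff j = 0 := by
  classical
  rw [AddMonoidAlgebra.coeff_mul, Finsupp.sum]
  apply Finset.sum_eq_zero
  intro a1 ha1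
  rw [Finsupp.sum]
  apply Finset.sum_eq_zero
  intro a2 ha2
  split_ifs with h12
  · rcases h a1 a2 h12 with h' | h'
    · have : f.coeff a1 = 0 := h'
      rw [this, zero_mul]
    · have : g.coeff a2 = 0 := h'
      rw [this, mul_zero]
  · rfl

lemma UB_mul {β : ℤ} {P P' : PowerSeries (LaurentPolynomial S)} (hP : UB β P) (hP' : UB β P') :
    UB β (P * P') := by
  intro k j hj
  rw [PowerSeries.coeff_mul]
  rw [AddMonoidAlgebra.coeff_sum, Finsupp.finset_sum_apply]
  apply Finset.sum_eq_zero
  intro p hp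
  have hpk : p.1 + p.2 = k := Finset.HasAntidiagonal.mem_antidiagonal.mp hp
  apply mul_apply_eq_zero'
  intro j1 j2 hj12
  by_cases h1 : β * p.1 < j1
  · exact Or.inl (hP p.1 j1 h1)
  · refine Or.inr (hP' p.2 j2 ?_)
    push_neg at h1
    have hc : (p.1 : ℤ) + (p.2 : ℤ) = k := by exact_mod_cast congrArg (Nat.cast : ℕ → ℤ) hpk
    have hk' : β * (k : ℤ) = β * p.1 + β * p.2 := by rw [← hc]; ring
    linarith

lemma LB_mul {α : ℤ} {P P' : PowerSeries (LaurentPolynomial S)} (hP : LB α P) (hP' : LB α P') :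
    LB α (P * P') := by
  intro k j hj
  rw [PowerSeries.coeff_mul]
  rw [AddMonoidAlgebra.coeff_sum, Finsupp.finset_sum_apply]
  apply Finset.sum_eq_zero
  intro p hp
  have hpk : p.1 + p.2 = k := Finset.HasAntidiagonal.mem_antidiagonal.mp hp
  apply mul_apply_eq_zero'
  intro j1 j2 hj12
  by_cases h1 : j1 < α * p.1
  · exact Or.inl (hP p.1 j1 h1)
  · refine Or.inr (hP' p.2 j2 ?_)
    push_neg at h1
    have hc : (p.1 : ℤ) + (p.2 : ℤ) = k := by exact_mod_cast congrArg (Nat.cast : ℕ → ℤ) hpk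
    have hk' : α * (k : ℤ) = α * p.1 + α * p.2 := by rw [← hc]; ring
    linarith

lemma UB_mono {β β' : ℤ} (h : β ≤ β') {P : PowerSeries (LaurentPolynomial S)} (hP : UB β P) :
    UB β' P := by
  intro k j hj
  exact hP k j (lt_of_le_of_lt (mul_le_mul_of_nonneg_right h (by positivity)) hj)

lemma LB_mono {α α' : ℤ} (h : α' ≤ α) {P : PowerSeries (LaurentPolynomial S)} (hP : LB α P) :
    LB α' P := by
  intro k j hj
  exact hP k j (lt_of_lt_of_le hj (mul_le_mul_of_nonneg_right h (by positivity)))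

lemma inx_UB {m : ℤ} {P : PowerSeries (LaurentPolynomial S)} (h : InXTpow S m P) : UB m P := by
  intro k j hj
  obtain ⟨c, hc⟩ := inx_coeff h k
  rw [hc, AddMonoidAlgebra.coeff_single, Finsupp.single_apply, if_neg (by omega)]

lemma inx_LB {m : ℤ} {P : PowerSeries (LaurentPolynomial S)} (h : InXTpow S m P) : LB m P := by
  intro k j hj
  obtain ⟨c, hc⟩ := inx_coeff h k
  rw [hc, AddMonoidAlgebra.coeff_single, Finsupp.single_apply, if_neg (by omega)]

lemma UB_prod {β : ℤ} (D : Finset ℤ) (F : ℤ → PowerSeries (LaurentPolynomial S))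
    (h : ∀ m ∈ D, UB β (F m)) : UB β (∏ m ∈ D, F m) := by
  classical
  induction D using Finset.induction_on with
  | empty => simpa using UB_one β
  | insert a s hx ih =>
    rw [Finset.prod_insert hx]
    exact UB_mul (h a (Finset.mem_insert_self a s))
      (ih fun m hm => h m (Finset.mem_insert_of_mem hm))

lemma LB_prod {α : ℤ} (D : Finset ℤ) (F : ℤ → PowerSeries (LaurentPolynomial S))
    (h : ∀ m ∈ D, LB α (F m)) : LB α (∏ m ∈ D, F m) := by
  classical
  induction D using Finset.induction_on with
  | empty => simpa using LB_one α
  | insert a s hx ih =>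
    rw [Finset.prod_insert hx]
    exact LB_mul (h a (Finset.mem_insert_self a s))
      (ih fun m hm => h m (Finset.mem_insert_of_mem hm))

end Aux

section Uniq

variable {S : Type*} [CommRing S]

lemma agree_mul {k : ℕ} {A A' B B' : PowerSeries (LaurentPolynomial S)}
    (hA : ∀ i < k, PowerSeries.coeff (R := LaurentPolynomial S) i A
        = PowerSeries.coeff (R := LaurentPolynomial S) i A')
    (hB : ∀ i < k, PowerSeries.coeff (R := LaurentPolynomial S) i B
        = PowerSeries.coeff (R := LaurentPolynomial S) i B') :
    ∀ i < k, PowerSeries.coeff (R := LaurentPolynomial S) i (A * B)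
        = PowerSeries.coeff (R := LaurentPolynomial S) i (A' * B') := by
  intro i hi
  rw [PowerSeries.coeff_mul, PowerSeries.coeff_mul]
  apply Finset.sum_congr rfl
  intro p hp
  rw [hA p.1 (lt_of_le_of_lt (Finset.HasAntidiagonal.antidiagonal.fst_le hp) hi),
      hB p.2 (lt_of_le_of_lt (Finset.HasAntidiagonal.antidiagonal.snd_le hp) hi)]

lemma agree_prod {k : ℕ} (E : Finset ℤ) {F F' : ℤ → PowerSeries (LaurentPolynomial S)}
    (h : ∀ m, ∀ i < k, PowerSeries.coeff (R := LaurentPolynomial S) i (F m)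
        = PowerSeries.coeff (R := LaurentPolynomial S) i (F' m)) :
    ∀ i < k, PowerSeries.coeff (R := LaurentPolynomial S) i (∏ m ∈ E, F m)
        = PowerSeries.coeff (R := LaurentPolynomial S) i (∏ m ∈ E, F' m) := by
  classical
  induction E using Finset.induction_on with
  | empty => intro i _; rfl
  | insert a s hx ih =>
    rw [Finset.prod_insert hx, Finset.prod_insert hx]
    exact agree_mul (h a) ih

lemma coeff_sub_mul {k : ℕ} (hk : 0 < k) {A A' B B' : PowerSeries (LaurentPolynomial S)}
    (hA : ∀ i < k, PowerSeries.coeff (R := LaurentPolynomial S) i A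
        = PowerSeries.coeff (R := LaurentPolynomial S) i A')
    (hB : ∀ i < k, PowerSeries.coeff (R := LaurentPolynomial S) i B
        = PowerSeries.coeff (R := LaurentPolynomial S) i B')
    (hA0 : PowerSeries.constantCoeff (R := LaurentPolynomial S) A = 1)
    (hB0 : PowerSeries.constantCoeff (R := LaurentPolynomial S) B = 1) :
    PowerSeries.coeff (R := LaurentPolynomial S) k (A * B)
      - PowerSeries.coeff (R := LaurentPolynomial S) k (A' * B')
    = (PowerSeries.coeff (R := LaurentPolynomial S) k A
        - PowerSeries.coeff (R := LaurentPolynomial S) k A')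
      + (PowerSeries.coeff (R := LaurentPolynomial S) k B
        - PowerSeries.coeff (R := LaurentPolynomial S) k B') := by
  have hB'0 : PowerSeries.coeff (R := LaurentPolynomial S) 0 B' = 1 := by
    rw [← hB 0 hk]
    simpa [PowerSeries.coeff_zero_eq_constantCoeff] using hB0
  have hA0' : PowerSeries.coeff (R := LaurentPolynomial S) 0 A = 1 := by
    simpa [PowerSeries.coeff_zero_eq_constantCoeff] using hA0
  have key : A * B - A' * B' = (A - A') * B' + A * (B - B') := by ring
  have h1 : PowerSeries.coeff (R := LaurentPolynomial S) k ((A - A') * B')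
      = PowerSeries.coeff (R := LaurentPolynomial S) k A
        - PowerSeries.coeff (R := LaurentPolynomial S) k A' := by
    rw [PowerSeries.coeff_mul]
    rw [Finset.sum_eq_single ((k, 0) : ℕ × ℕ)]
    · rw [map_sub, hB'0, mul_one]
    · intro p hp hpne
      have hpk : p.1 + p.2 = k := Finset.HasAntidiagonal.mem_antidiagonal.mp hp
      have hp1 : p.1 < k := by
        rcases lt_or_eq_of_le (by omega : p.1 ≤ k) with h | h
        · exact h
        · exact absurd (Prod.ext h (by omega)) hpne
      rw [map_sub, hA p.1 hp1, sub_self, zero_mul]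
    · intro h
      exact absurd (Finset.HasAntidiagonal.mem_antidiagonal.mpr (by simp)) h
  have h2 : PowerSeries.coeff (R := LaurentPolynomial S) k (A * (B - B'))
      = PowerSeries.coeff (R := LaurentPolynomial S) k B
        - PowerSeries.coeff (R := LaurentPolynomial S) k B' := by
    rw [PowerSeries.coeff_mul]
    rw [Finset.sum_eq_single ((0, k) : ℕ × ℕ)]
    · rw [map_sub, hA0', one_mul]
    · intro p hp hpne
      have hpk : p.1 + p.2 = k := Finset.HasAntidiagonal.mem_antidiagonal.mp hp
      have hp2 : p.2 < k := by
        rcases lt_or_eq_of_le (by omega : p.2 ≤ k) with h | h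
        · exact h
        · exact absurd (Prod.ext (by omega) h) hpne
      rw [map_sub, hB p.2 hp2, sub_self, mul_zero]
    · intro h
      exact absurd (Finset.HasAntidiagonal.mem_antidiagonal.mpr (by simp)) h
  calc PowerSeries.coeff (R := LaurentPolynomial S) k (A * B)
      - PowerSeries.coeff (R := LaurentPolynomial S) k (A' * B')
      = PowerSeries.coeff (R := LaurentPolynomial S) k (A * B - A' * B') := (map_sub _ _ _).symm
    _ = PowerSeries.coeff (R := LaurentPolynomial S) k ((A - A') * B' + A * (B - B')) := by rw [key]
    _ = _ := by rw [map_add, h1, h2]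

lemma uniq_aux (E : Finset ℤ) (F F' : ℤ → PowerSeries (LaurentPolynomial S))
    (hFx : ∀ m, InXTpow S m (F m))
    (hF0 : ∀ m, PowerSeries.constantCoeff (R := LaurentPolynomial S) (F m) = 1)
    (hF'x : ∀ m, InXTpow S m (F' m))
    (hF'0 : ∀ m, PowerSeries.constantCoeff (R := LaurentPolynomial S) (F' m) = 1)
    (hFE : ∀ m ∉ E, F m = F' m)
    (hprod : (∏ m ∈ E, F m) = ∏ m ∈ E, F' m) : ∀ m, F m = F' m := by
  classical
  have claim : ∀ k : ℕ, ∀ m : ℤ, PowerSeries.coeff (R := LaurentPolynomial S) k (F m)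
      = PowerSeries.coeff (R := LaurentPolynomial S) k (F' m) := by
    intro k
    induction k using Nat.strong_induction_on with
    | _ k IH =>
    rcases Nat.eq_zero_or_pos k with hk | hk
    · subst hk
      intro m
      rw [PowerSeries.coeff_zero_eq_constantCoeff]
      rw [hF0 m, hF'0 m]
    · intro m
      by_cases hm : m ∈ E
      · have key : ∀ E'' : Finset ℤ,
            PowerSeries.coeff (R := LaurentPolynomial S) k (∏ m' ∈ E'', F m')
              - PowerSeries.coeff (R := LaurentPolynomial S) k (∏ m' ∈ E'', F' m')
            = ∑ m' ∈ E'', (PowerSeries.coeff (R := LaurentPolynomial S) k (F m')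
              - PowerSeries.coeff (R := LaurentPolynomial S) k (F' m')) := by
          intro E''
          induction E'' using Finset.induction_on with
          | empty => simp
          | insert a s hx ihE =>
            rw [Finset.prod_insert hx, Finset.prod_insert hx, Finset.sum_insert hx, ← ihE]
            have hB0 : PowerSeries.constantCoeff (R := LaurentPolynomial S) (∏ m' ∈ s, F m') = 1 := by
              rw [map_prod]
              exact Finset.prod_eq_one fun m' _ => hF0 m'
            exact coeff_sub_mul hk (fun i hi => IH i hi a) (agree_prod s (fun m' i hi => IH i hi m'))
              (hF0 a) hB0
        have h0 := key E
        rw [hprod, sub_self] at h0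
        choose c hc using fun m' => inx_coeff (hFx m') k
        choose c' hc' using fun m' => inx_coeff (hF'x m') k
        have h2 := congrArg (fun q : LaurentPolynomial S => q.coeff (m * k)) h0
        rw [AddMonoidAlgebra.coeff_sum, Finsupp.finset_sum_apply] at h2
        have h3 : ∀ m' ∈ E, m' ≠ m →
            ((PowerSeries.coeff (R := LaurentPolynomial S) k (F m')
              - PowerSeries.coeff (R := LaurentPolynomial S) k (F' m')) : LaurentPolynomial S).coeff (m * k)
            = 0 := by
          intro m' _ hne
          rw [hc m', hc' m', AddMonoidAlgebra.coeff_sub, AddMonoidAlgebra.coeff_single,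
              AddMonoidAlgebra.coeff_single, Finsupp.sub_apply, Finsupp.single_apply, Finsupp.single_apply,
            if_neg, if_neg, sub_self]
          · intro h; exact hne (mul_right_cancel₀ (by exact_mod_cast hk.ne' : (k : ℤ) ≠ 0) h)
          · intro h; exact hne (mul_right_cancel₀ (by exact_mod_cast hk.ne' : (k : ℤ) ≠ 0) h)
        rw [Finset.sum_eq_single m h3 (fun h => absurd hm h)] at h2
        rw [hc m, hc' m, AddMonoidAlgebra.coeff_sub, AddMonoidAlgebra.coeff_single,
            AddMonoidAlgebra.coeff_single, Finsupp.sub_apply, Finsupp.single_apply, Finsupp.single_apply,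
          if_pos rfl, if_pos rfl] at h2
        have hcc : c m = c' m := by
          have hz : (0 : LaurentPolynomial S).coeff (m * (k : ℤ)) = 0 := rfl
          rw [hz] at h2
          exact (sub_eq_zero.mp h2.symm)
        rw [hc m, hc' m, hcc]
      · rw [hFE m hm]
  intro m
  exact PowerSeries.ext fun k => claim k m

end Uniq

section Poly

variable {S : Type*} [CommRing S]

lemma poly_aux : ∀ (n : ℕ) (D : Finset ℤ) (F : ℤ → PowerSeries (LaurentPolynomial S)) (N : ℕ),
    D.card = n →
    (∀ m ∈ D, InXTpow S m (F m)) →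
    (∀ m ∈ D, PowerSeries.constantCoeff (R := LaurentPolynomial S) (F m) = 1) →
    (∀ k > N, PowerSeries.coeff (R := LaurentPolynomial S) k (∏ m ∈ D, F m) = 0) →
    ∀ m ∈ D, ∃ N' : ℕ, ∀ k > N', PowerSeries.coeff (R := LaurentPolynomial S) k (F m) = 0 := by
  classical
  intro n
  induction n with
  | zero =>
    intro D F N hcard _ _ _ m hm
    rw [Finset.card_eq_zero] at hcard
    subst hcard
    exact absurd hm (Finset.notMem_empty m)
  | succ n ih =>
    intro D F N hcard hFx hF0 hQ m hm
    have hne : D.Nonempty := ⟨m, hm⟩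
    set β := D.max' hne with hβ
    set α := D.min' hne with hα
    have hβmem : β ∈ D := D.max'_mem hne
    have hαβ : α ≤ β := D.min'_le β hβmem
    set Qp := ∏ m' ∈ D.erase β, F m' with hQp
    have hQfact : (∏ m' ∈ D, F m') = F β * Qp := (Finset.mul_prod_erase D F hβmem).symm
    have hUBp : UB (β - 1) Qp := by
      apply UB_prod
      intro m' hm'
      have h1 : m' ∈ D := Finset.mem_of_mem_erase hm'
      have h2 : m' ≠ β := (Finset.mem_erase.mp hm').1
      have h3 : m' ≤ β := D.le_max' m' h1
      exact UB_mono (by omega) (inx_UB (hFx m' h1))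
    have hLBQ : LB α (∏ m' ∈ D, F m') := by
      apply LB_prod
      intro m' hm'
      exact LB_mono (D.min'_le m' hm') (inx_LB (hFx m' hm'))
    have hQp0const : PowerSeries.coeff (R := LaurentPolynomial S) 0 Qp = 1 := by
      rw [PowerSeries.coeff_zero_eq_constantCoeff, hQp, map_prod]
      exact Finset.prod_eq_one fun m' hm' => hF0 m' (Finset.mem_of_mem_erase hm')
    -- the key lower-bound claim for Qp
    have hQp0 : ∀ k : ℕ, ∀ j : ℤ, j < β * (k : ℤ) - (β - α) * (N : ℤ) →
        (PowerSeries.coeff (R := LaurentPolynomial S) k Qp).coeff j = 0 := by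
      intro k
      induction k using Nat.strong_induction_on with
      | _ k IHk =>
      intro j hj
      have hQkj : (PowerSeries.coeff (R := LaurentPolynomial S) k (∏ m' ∈ D, F m')).coeff j = 0 := by
        by_cases hkN : k ≤ N
        · apply hLBQ
          have h1 : ((β - α) * (k : ℤ)) ≤ (β - α) * (N : ℤ) :=
            mul_le_mul_of_nonneg_left (by exact_mod_cast hkN) (by omega)
          linarith
        · rw [hQ k (by omega)]
          rfl
      have hsum : (0 : S) = ∑ p ∈ Finset.HasAntidiagonal.antidiagonal k,
          ((PowerSeries.coeff (R := LaurentPolynomial S) p.1 (F β)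
            * PowerSeries.coeff (R := LaurentPolynomial S) p.2 Qp : LaurentPolynomial S)).coeff j := by
        have e1 : PowerSeries.coeff (R := LaurentPolynomial S) k (∏ m' ∈ D, F m')
            = ∑ p ∈ Finset.HasAntidiagonal.antidiagonal k,
              PowerSeries.coeff (R := LaurentPolynomial S) p.1 (F β)
                * PowerSeries.coeff (R := LaurentPolynomial S) p.2 Qp := by
          rw [hQfact, PowerSeries.coeff_mul]
        have h := congrArg (fun q : LaurentPolynomial S => q.coeff j) e1
        rw [AddMonoidAlgebra.coeff_sum, Finsupp.finset_sum_apply] at h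
        rw [← h, hQkj]
      rw [Finset.sum_eq_single ((0, k) : ℕ × ℕ)] at hsum
      · have h00 : PowerSeries.coeff (R := LaurentPolynomial S) 0 (F β) = 1 := by
          rw [PowerSeries.coeff_zero_eq_constantCoeff]
          exact hF0 β hβmem
        rw [h00, one_mul] at hsum
        exact hsum.symm
      · intro p hp hpne
        have hpk : p.1 + p.2 = k := Finset.HasAntidiagonal.mem_antidiagonal.mp hp
        have hp1 : 0 < p.1 := by
          rcases Nat.eq_zero_or_pos p.1 with h | h
          · exact absurd (Prod.ext h (by omega)) hpne
          · exact h
        obtain ⟨cc, hcc⟩ := inx_coeff (hFx β hβmem) p.1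
        rw [hcc, single_mul_apply']
        have hcast : β * (k : ℤ) = β * (p.1 : ℤ) + β * (p.2 : ℤ) := by
          have : ((p.1 : ℤ)) + (p.2 : ℤ) = (k : ℤ) := by exact_mod_cast hpk
          rw [← this]; ring
        have := IHk p.2 (by omega) (j - β * p.1) (by linarith)
        rw [this, mul_zero]
      · intro h
        exact absurd (Finset.HasAntidiagonal.mem_antidiagonal.mpr (by simp)) h
    have hN'cast : ((β - α).toNat : ℤ) = β - α := Int.toNat_of_nonneg (by omega)
    set N' : ℕ := (β - α).toNat * N with hN'
    have hQppoly : ∀ k > N', PowerSeries.coeff (R := LaurentPolynomial S) k Qp = 0 := by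
      intro k hk
      apply AddMonoidAlgebra.ext
      apply Finsupp.ext
      intro j
      show (PowerSeries.coeff (R := LaurentPolynomial S) k Qp).coeff j = 0
      by_cases hcase : (β - 1) * (k : ℤ) < j
      · exact hUBp k j hcase
      · push_neg at hcase
        apply hQp0 k j
        have hkN' : ((N' : ℤ)) < (k : ℤ) := by exact_mod_cast hk
        have hNval : ((β - α) * (N : ℤ)) = (N' : ℤ) := by
          rw [hN']; push_cast; rw [hN'cast]
        nlinarith [hcase, hkN', hNval]
    have herase := ih (D.erase β) F N'
      (by rw [Finset.card_erase_of_mem hβmem, hcard]; rfl)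
      (fun m' hm' => hFx m' (Finset.mem_of_mem_erase hm'))
      (fun m' hm' => hF0 m' (Finset.mem_of_mem_erase hm'))
      hQppoly
    by_cases hmβ : m = β
    · refine ⟨N, fun k hk => ?_⟩
      rw [hmβ]
      obtain ⟨cc, hcc⟩ := inx_coeff (hFx β hβmem) k
      have hval : (PowerSeries.coeff (R := LaurentPolynomial S) k (∏ m' ∈ D, F m')).coeff (β * k) = cc := by
        have e1 : PowerSeries.coeff (R := LaurentPolynomial S) k (∏ m' ∈ D, F m')
            = ∑ p ∈ Finset.HasAntidiagonal.antidiagonal k,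
              PowerSeries.coeff (R := LaurentPolynomial S) p.1 (F β)
                * PowerSeries.coeff (R := LaurentPolynomial S) p.2 Qp := by
          rw [hQfact, PowerSeries.coeff_mul]
        have hexp := congrArg (fun q : LaurentPolynomial S => q.coeff (β * (k : ℤ))) e1
        rw [AddMonoidAlgebra.coeff_sum, Finsupp.finset_sum_apply] at hexp
        rw [hexp, Finset.sum_eq_single ((k, 0) : ℕ × ℕ)]
        · rw [hcc, hQp0const, mul_one, AddMonoidAlgebra.coeff_single, Finsupp.single_apply, if_pos rfl]
        · intro p hp hpne
          have hpk : p.1 + p.2 = k := Finset.HasAntidiagonal.mem_antidiagonal.mp hp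
          have hp2 : 0 < p.2 := by
            rcases Nat.eq_zero_or_pos p.2 with h | h
            · exact absurd (Prod.ext (by omega) h) hpne
            · exact h
          obtain ⟨dd, hdd⟩ := inx_coeff (hFx β hβmem) p.1
          rw [hdd, single_mul_apply']
          have hcast : β * (k : ℤ) - β * (p.1 : ℤ) = β * (p.2 : ℤ) := by
            have : ((p.1 : ℤ)) + (p.2 : ℤ) = (k : ℤ) := by exact_mod_cast hpk
            rw [← this]; ring
          rw [hcast]
          have hz : (PowerSeries.coeff (R := LaurentPolynomial S) p.2 Qp).coeff (β * (p.2 : ℤ)) = 0 := by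
            apply hUBp
            have h2 : (0 : ℤ) < (p.2 : ℤ) := by exact_mod_cast hp2
            have h3 : (β : ℤ) * p.2 - (β - 1) * p.2 = p.2 := by ring
            linarith
          rw [hz, mul_zero]
        · intro h
          exact absurd (Finset.HasAntidiagonal.mem_antidiagonal.mpr (by simp)) h
      rw [hQ k hk] at hval
      have hcc0 : cc = 0 := hval.symm
      rw [hcc, hcc0, AddMonoidAlgebra.single_zero]
    · exact herase m (Finset.mem_erase.mpr ⟨hmβ, hm⟩)

end Poly

/-- Let `S` be a commutative ring and `Q ∈ S[T^{±1}][[X]]` with `Q ≡ 1 mod X`.  There is at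
most one way to write `Q = ∏_{m ∈ ℤ} Q_m` with `Q_m ∈ S[[XT^m]]`, `Q_m ≡ 1 mod X`, and
almost all `Q_m = 1`.  Moreover, if `Q` is a polynomial in `X`, then so is each `Q_m` in
such a factorization. -/
theorem stmt_12 (S : Type*) [CommRing S]
    (Q : PowerSeries (LaurentPolynomial S))
    (hQ : PowerSeries.constantCoeff (R := LaurentPolynomial S) Q = 1) :
    (∀ (D D' : Finset ℤ) (F F' : ℤ → PowerSeries (LaurentPolynomial S)),
      (∀ m, InXTpow S m (F m)) →
      (∀ m, PowerSeries.constantCoeff (R := LaurentPolynomial S) (F m) = 1) →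
      (∀ m ∉ D, F m = 1) → (∏ m ∈ D, F m) = Q →
      (∀ m, InXTpow S m (F' m)) →
      (∀ m, PowerSeries.constantCoeff (R := LaurentPolynomial S) (F' m) = 1) →
      (∀ m ∉ D', F' m = 1) → (∏ m ∈ D', F' m) = Q →
      ∀ m, F m = F' m) ∧
    ((∃ N : ℕ, ∀ k > N, PowerSeries.coeff (R := LaurentPolynomial S) k Q = 0) →
      ∀ (D : Finset ℤ) (F : ℤ → PowerSeries (LaurentPolynomial S)),
        (∀ m, InXTpow S m (F m)) →
        (∀ m, PowerSeries.constantCoeff (R := LaurentPolynomial S) (F m) = 1) →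
        (∀ m ∉ D, F m = 1) → (∏ m ∈ D, F m) = Q →
        ∀ m, ∃ N : ℕ, ∀ k > N, PowerSeries.coeff (R := LaurentPolynomial S) k (F m) = 0) := by
  constructor
  · intro D D' F F' hFx hF0 hFD hprod hF'x hF'0 hF'D' hprod'
    have hsub : D ⊆ D ∪ D' := Finset.subset_union_left
    have hsub' : D' ⊆ D ∪ D' := Finset.subset_union_right
    have h1 : (∏ m ∈ D ∪ D', F m) = Q :=
      (Finset.prod_subset hsub (fun x _ hx => hFD x hx)).symm.trans hprod
    have h2 : (∏ m ∈ D ∪ D', F' m) = Q :=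
      (Finset.prod_subset hsub' (fun x _ hx => hF'D' x hx)).symm.trans hprod'
    exact uniq_aux (D ∪ D') F F' hFx hF0 hF'x hF'0
      (fun m hm => by
        rw [hFD m (fun h => hm (hsub h)), hF'D' m (fun h => hm (hsub' h))])
      (h1.trans h2.symm)
  · rintro ⟨N, hN⟩ D F hFx hF0 hFD hprod m
    by_cases hm : m ∈ D
    · exact poly_aux D.card D F N rfl (fun m' _ => hFx m') (fun m' _ => hF0 m')
        (fun k hk => by rw [hprod]; exact hN k hk) m hm
    · refine ⟨0, fun k hk => ?_⟩
      rw [hFD m hm, PowerSeries.coeff_one, if_neg (by omega)]
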